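/- Let N ≥ 2 be an integer and let m₀, m₀' : ℝ → ℂ be essentially bounded measurable 2π-periodic functions. Suppose φ, φ' ∈ L²(ℝ) satisfy the scaling equations φ̂(ω) = N^{-1/2} m₀(ω/N) φ̂(ω/N) and φ̂'(ω) = N^{-1/2} m₀'(ω/N) φ̂'(ω/N) for a.e. ω ∈ ℝ. Then h₀ := Per(conj(φ̂) φ̂') ∈ L¹(0,2π) satisfies R_{m₀,m₀'} h₀ = h₀, i.e. (1/N) Σ_{l=0}^{N-1} conj(m₀((ω+2lπ)/N)) m₀'((ω+2lπ)/N) h₀((ω+2lπ)/N) = h₀(ω) for a.e. ω. -/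

import Mathlib

/- STATEMENT 9: if φ, φ' ∈ L²(ℝ) satisfy the Fourier-domain scaling equations
`φ̂(ω) = N^{-1/2} m₀(ω/N) φ̂(ω/N)` and `φ̂'(ω) = N^{-1/2} m₀'(ω/N) φ̂'(ω/N)` (a.e.),
then `h₀ := Per(conj(φ̂) φ̂') ∈ L¹(0,2π)` satisfies `R_{m₀,m₀'} h₀ = h₀` a.e.
Since the statement depends on φ, φ' only through their Fourier–Plancherel transforms,
we quantify over the transforms `G = φ̂`, `G' = φ̂'` (functions in L²(ℝ)) directly. -/

noncomputable section

open MeasureTheory Complex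
open scoped ComplexConjugate

/-- The Ruelle transfer operator `R_{m₀,m₀'}` at scale `N` for 2π-periodic functions. -/
def ruelle (N : ℕ) (m₀ m₀' : ℝ → ℂ) (f : ℝ → ℂ) : ℝ → ℂ := fun ω =>
  (N : ℂ)⁻¹ * ∑ l ∈ Finset.range N,
    conj (m₀ ((ω + 2 * Real.pi * l) / N)) * m₀' ((ω + 2 * Real.pi * l) / N) *
      f ((ω + 2 * Real.pi * l) / N)

section Aux

open scoped ENNReal NNReal

/-- transfer an a.e. property along a translation -/
lemma ae_add {p : ℝ → Prop} (h : ∀ᵐ x : ℝ, p x) (c : ℝ) : ∀ᵐ x : ℝ, p (x + c) :=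
  ((measurePreserving_add_right (volume : Measure ℝ) c).quasiMeasurePreserving).ae h

/-- transfer an a.e. property along division by a nonzero constant -/
lemma ae_div {p : ℝ → Prop} (h : ∀ᵐ x : ℝ, p x) {c : ℝ} (hc : c ≠ 0) :
    ∀ᵐ x : ℝ, p (x / c) := by
  have hq : Measure.QuasiMeasurePreserving (fun x : ℝ => x / c) volume volume := by
    refine ⟨(measurable_id.div_const c), ?_⟩
    have : (fun x : ℝ => x / c) = fun x : ℝ => x * c⁻¹ := by
      funext x; rw [div_eq_mul_inv]
    rw [this, Real.map_volume_mul_right (inv_ne_zero hc)]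
    exact Measure.smul_absolutelyContinuous
  exact hq.ae h

/-- shift a set-lintegral on an interval -/
lemma lint_shift (f : ℝ → ℝ≥0∞) (c a b : ℝ) :
    ∫⁻ x in Set.Ioc a b, f (x + c) = ∫⁻ x in Set.Ioc (a + c) (b + c), f x := by
  have h := (measurePreserving_add_right (volume : Measure ℝ) c).setLIntegral_comp_preimage_emb
    (MeasurableEquiv.addRight c).measurableEmbedding f (Set.Ioc (a + c) (b + c))
  rw [Set.preimage_add_const_Ioc] at h
  simp only [add_sub_cancel_right] at h
  exact h

lemma cover_Ioc (a : ℝ) :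
    (⋃ k : ℤ, Set.Ioc (a + 2 * Real.pi * k) (a + 2 * Real.pi * k + 2 * Real.pi)) =
      Set.univ := by
  rw [← iUnion_Ioc_add_zsmul Real.two_pi_pos a]
  apply Set.iUnion_congr
  intro k
  have h1 : a + 2 * Real.pi * k = a + k • (2 * Real.pi) := by
    rw [zsmul_eq_mul]; ring
  have h2 : a + 2 * Real.pi * k + 2 * Real.pi = a + (k + 1) • (2 * Real.pi) := by
    rw [zsmul_eq_mul]; push_cast; ring
  rw [h2, h1]

lemma disj_Ioc (a : ℝ) :
    Pairwise (Function.onFun Disjoint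
      (fun k : ℤ => Set.Ioc (a + 2 * Real.pi * k) (a + 2 * Real.pi * k + 2 * Real.pi))) := by
  have key : ∀ m n : ℤ, m < n →
      Disjoint (Set.Ioc (a + 2 * Real.pi * m) (a + 2 * Real.pi * m + 2 * Real.pi))
        (Set.Ioc (a + 2 * Real.pi * n) (a + 2 * Real.pi * n + 2 * Real.pi)) := by
    intro m n h
    rw [Set.disjoint_left]
    rintro x ⟨hx1, hx2⟩ ⟨hx3, hx4⟩
    have hmn : (m : ℝ) + 1 ≤ n := by exact_mod_cast h
    nlinarith [Real.two_pi_pos, mul_le_mul_of_nonneg_left hmn Real.two_pi_pos.le]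
  intro m n hmn
  rcases hmn.lt_or_gt with h | h
  · exact key _ _ h
  · exact (key _ _ h).symm

/-- The lintegral of the periodization of the `ennnorm` over one period is the full lintegral. -/
lemma lint_periodization (F : ℝ → ℂ) (hFm : Measurable F) (a : ℝ) :
    ∫⁻ ω in Set.Ioc a (a + 2 * Real.pi), ∑' k : ℤ, (‖F (ω + 2 * Real.pi * k)‖₊ : ℝ≥0∞) =
      ∫⁻ x, (‖F x‖₊ : ℝ≥0∞) := by
  have hshift : ∀ k : ℤ,
      (∫⁻ ω in Set.Ioc a (a + 2 * Real.pi), (‖F (ω + 2 * Real.pi * k)‖₊ : ℝ≥0∞)) =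
      ∫⁻ x in Set.Ioc (a + 2 * Real.pi * k) (a + 2 * Real.pi * k + 2 * Real.pi),
        (‖F x‖₊ : ℝ≥0∞) := by
    intro k
    rw [lint_shift (fun x => (‖F x‖₊ : ℝ≥0∞)) (2 * Real.pi * k) a (a + 2 * Real.pi)]
    congr 2
    ring
  calc ∫⁻ ω in Set.Ioc a (a + 2 * Real.pi), ∑' k : ℤ, (‖F (ω + 2 * Real.pi * k)‖₊ : ℝ≥0∞)
      = ∑' k : ℤ, ∫⁻ ω in Set.Ioc a (a + 2 * Real.pi),
          (‖F (ω + 2 * Real.pi * k)‖₊ : ℝ≥0∞) :=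
        lintegral_tsum fun k =>
          ((hFm.comp (measurable_id.add_const (2 * Real.pi * k))).nnnorm.coe_nnreal_ennreal).aemeasurable
    _ = ∑' k : ℤ, ∫⁻ x in Set.Ioc (a + 2 * Real.pi * k) (a + 2 * Real.pi * k + 2 * Real.pi),
          (‖F x‖₊ : ℝ≥0∞) := tsum_congr hshift
    _ = ∫⁻ x in ⋃ k : ℤ, Set.Ioc (a + 2 * Real.pi * k) (a + 2 * Real.pi * k + 2 * Real.pi),
          (‖F x‖₊ : ℝ≥0∞) :=
        (lintegral_iUnion (fun k => measurableSet_Ioc) (disj_Ioc a) _).symm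
    _ = ∫⁻ x, (‖F x‖₊ : ℝ≥0∞) := by rw [cover_Ioc a, Measure.restrict_univ]

/-- a.e. summability of the periodization of an integrable function -/
lemma summable_ae (F : ℝ → ℂ) (hFm : Measurable F) (hFi : Integrable F) :
    ∀ᵐ ω : ℝ, Summable fun k : ℤ => ‖F (ω + 2 * Real.pi * k)‖ := by
  have hSm : Measurable (fun ω : ℝ => ∑' k : ℤ, (‖F (ω + 2 * Real.pi * k)‖₊ : ℝ≥0∞)) :=
    Measurable.ennreal_tsum fun k =>
      (hFm.comp (measurable_id.add_const (2 * Real.pi * k))).nnnorm.coe_nnreal_ennreal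
  have hfin : (∫⁻ x, (‖F x‖₊ : ℝ≥0∞)) ≠ ∞ := hFi.2.ne
  have hIoc : ∀ a : ℝ, (volume : Measure ℝ)
      ({ω : ℝ | (∑' k : ℤ, (‖F (ω + 2 * Real.pi * k)‖₊ : ℝ≥0∞)) = ∞}
        ∩ Set.Ioc a (a + 2 * Real.pi)) = 0 := by
    intro a
    have h1 : ∀ᵐ ω ∂(volume.restrict (Set.Ioc a (a + 2 * Real.pi))),
        (∑' k : ℤ, (‖F (ω + 2 * Real.pi * k)‖₊ : ℝ≥0∞)) < ∞ :=
      ae_lt_top hSm (by rw [lint_periodization F hFm a]; exact hfin)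
    have hEm : MeasurableSet {ω : ℝ |
        (∑' k : ℤ, (‖F (ω + 2 * Real.pi * k)‖₊ : ℝ≥0∞)) = ∞} :=
      hSm (measurableSet_singleton ∞)
    have h2 : volume.restrict (Set.Ioc a (a + 2 * Real.pi))
        {ω : ℝ | (∑' k : ℤ, (‖F (ω + 2 * Real.pi * k)‖₊ : ℝ≥0∞)) = ∞} = 0 := by
      rw [ae_iff] at h1
      convert h1 using 2
      ext x
      simp [lt_top_iff_ne_top]
    rw [Measure.restrict_apply hEm] at h2
    exact h2
  have hnull : (volume : Measure ℝ)
      {ω : ℝ | (∑' k : ℤ, (‖F (ω + 2 * Real.pi * k)‖₊ : ℝ≥0∞)) = ∞} = 0 := by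
    set E := {ω : ℝ | (∑' k : ℤ, (‖F (ω + 2 * Real.pi * k)‖₊ : ℝ≥0∞)) = ∞} with hE
    have hsub : E ⊆ ⋃ k : ℤ, E ∩
        Set.Ioc ((0 : ℝ) + 2 * Real.pi * k) ((0 : ℝ) + 2 * Real.pi * k + 2 * Real.pi) := by
      intro x hx
      have hx2 : x ∈ (⋃ k : ℤ, Set.Ioc ((0 : ℝ) + 2 * Real.pi * k)
          ((0 : ℝ) + 2 * Real.pi * k + 2 * Real.pi)) := by
        rw [cover_Ioc 0]; trivial
      rcases Set.mem_iUnion.mp hx2 with ⟨k, hk⟩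
      exact Set.mem_iUnion.mpr ⟨k, hx, hk⟩
    exact measure_mono_null hsub (measure_iUnion_null fun k => hIoc _)
  rw [ae_iff]
  refine measure_mono_null ?_ hnull
  intro ω hω
  simp only [Set.mem_setOf_eq] at hω ⊢
  by_contra hSSω
  apply hω
  have h1 : Summable fun k : ℤ => ‖F (ω + 2 * Real.pi * k)‖₊ :=
    ENNReal.tsum_coe_ne_top_iff_summable.mp hSSω
  have h2 := NNReal.summable_coe.mpr h1
  simpa [coe_nnnorm] using h2

/-- integrability of the periodization on one period -/
lemma periodization_integrableOn (F : ℝ → ℂ) (hFm : Measurable F) (hFi : Integrable F) (a : ℝ) :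
    IntegrableOn (fun ω => ∑' k : ℤ, F (ω + 2 * Real.pi * k))
      (Set.Ioc a (a + 2 * Real.pi)) volume := by
  have hsum := summable_ae F hFm hFi
  constructor
  · -- a.e. strong measurability
    refine aestronglyMeasurable_of_tendsto_ae (u := Filter.atTop)
      (f := fun (n : ℕ) ω => ∑ k ∈ Finset.Icc (-(n : ℤ)) (n : ℤ), F (ω + 2 * Real.pi * k))
      ?_ ?_
    · intro n
      apply Measurable.aestronglyMeasurable
      exact Finset.measurable_sum _ fun k _ =>
        hFm.comp (measurable_id.add_const (2 * Real.pi * k))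
    · filter_upwards [ae_restrict_of_ae hsum] with ω hω
      have hs : Summable fun k : ℤ => F (ω + 2 * Real.pi * k) := hω.of_norm
      have hts := hs.hasSum
      have hmono : Monotone fun n : ℕ => Finset.Icc (-(n : ℤ)) (n : ℤ) := by
        intro m n h
        apply Finset.Icc_subset_Icc
        · exact neg_le_neg (by exact_mod_cast h)
        · exact_mod_cast h
      have hexh : ∀ i : ℤ, ∃ n : ℕ, i ∈ Finset.Icc (-(n : ℤ)) (n : ℤ) := by
        intro i
        refine ⟨i.natAbs, ?_⟩
        rw [Finset.mem_Icc]
        omega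
      exact hts.comp (Filter.tendsto_atTop_finset_of_monotone hmono hexh)
  · -- finite integral
    rw [hasFiniteIntegral_def]
    have hbd : ∀ᵐ ω ∂(volume.restrict (Set.Ioc a (a + 2 * Real.pi))),
        (‖∑' k : ℤ, F (ω + 2 * Real.pi * k)‖₊ : ℝ≥0∞) ≤
          ∑' k : ℤ, (‖F (ω + 2 * Real.pi * k)‖₊ : ℝ≥0∞) := by
      filter_upwards [ae_restrict_of_ae hsum] with ω hω
      have hs : Summable fun k : ℤ => ‖F (ω + 2 * Real.pi * k)‖₊ := by
        rw [← NNReal.summable_coe]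
        simpa [coe_nnnorm] using hω
      calc (‖∑' k : ℤ, F (ω + 2 * Real.pi * k)‖₊ : ℝ≥0∞)
          ≤ ((∑' k : ℤ, ‖F (ω + 2 * Real.pi * k)‖₊ : ℝ≥0) : ℝ≥0∞) := by
            exact_mod_cast ENNReal.coe_le_coe.mpr (nnnorm_tsum_le hs)
        _ = ∑' k : ℤ, (‖F (ω + 2 * Real.pi * k)‖₊ : ℝ≥0∞) := ENNReal.coe_tsum hs
    calc ∫⁻ ω in Set.Ioc a (a + 2 * Real.pi), (‖∑' k : ℤ, F (ω + 2 * Real.pi * k)‖₊ : ℝ≥0∞)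
        ≤ ∫⁻ ω in Set.Ioc a (a + 2 * Real.pi),
            ∑' k : ℤ, (‖F (ω + 2 * Real.pi * k)‖₊ : ℝ≥0∞) := lintegral_mono_ae hbd
      _ = ∫⁻ x, (‖F x‖₊ : ℝ≥0∞) := lint_periodization F hFm a
      _ < ∞ := hFi.2

end Aux

set_option maxHeartbeats 1000000 in
theorem stmt_9 (N : ℕ) (hN : 2 ≤ N) (m₀ m₀' : ℝ → ℂ)
    -- m₀, m₀' essentially bounded, measurable, 2π-periodic
    (hm₀m : Measurable m₀) (hm₀b : ∃ C, ∀ x, ‖m₀ x‖ ≤ C)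
    (hm₀p : ∀ x, m₀ (x + 2 * Real.pi) = m₀ x)
    (hm₀'m : Measurable m₀') (hm₀'b : ∃ C, ∀ x, ‖m₀' x‖ ≤ C)
    (hm₀'p : ∀ x, m₀' (x + 2 * Real.pi) = m₀' x)
    -- G = φ̂, G' = φ̂' ∈ L²(ℝ)
    (G G' : ℝ → ℂ)
    (hG : MemLp G 2 (volume : Measure ℝ)) (hG' : MemLp G' 2 (volume : Measure ℝ))
    -- the scaling equations
    (hscal : ∀ᵐ ω ∂(volume : Measure ℝ),
      G ω = ((Real.sqrt N : ℝ) : ℂ)⁻¹ * m₀ (ω / N) * G (ω / N))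
    (hscal' : ∀ᵐ ω ∂(volume : Measure ℝ),
      G' ω = ((Real.sqrt N : ℝ) : ℂ)⁻¹ * m₀' (ω / N) * G' (ω / N)) :
    -- h₀ = Per(conj(φ̂) φ̂') is in L¹(0,2π) and is a fixed point of R_{m₀,m₀'}
    IntegrableOn
      (fun ω => ∑' k : ℤ, conj (G (ω + 2 * Real.pi * k)) * G' (ω + 2 * Real.pi * k))
      (Set.Ioc 0 (2 * Real.pi)) volume ∧
    ∀ᵐ ω ∂(volume : Measure ℝ),
      ruelle N m₀ m₀'
        (fun x => ∑' k : ℤ, conj (G (x + 2 * Real.pi * k)) * G' (x + 2 * Real.pi * k)) ω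
      = ∑' k : ℤ, conj (G (ω + 2 * Real.pi * k)) * G' (ω + 2 * Real.pi * k) := by
  haveI : NeZero N := ⟨by omega⟩
  have hNR : (N : ℝ) ≠ 0 := by
    simp only [ne_eq, Nat.cast_eq_zero]
    omega
  -- measurable representatives
  obtain ⟨g, hgm, hGg⟩ : ∃ g : ℝ → ℂ, Measurable g ∧ G =ᵐ[volume] g :=
    ⟨hG.1.aemeasurable.mk G, hG.1.aemeasurable.measurable_mk, hG.1.aemeasurable.ae_eq_mk⟩
  obtain ⟨g', hg'm, hG'g⟩ : ∃ g' : ℝ → ℂ, Measurable g' ∧ G' =ᵐ[volume] g' :=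
    ⟨hG'.1.aemeasurable.mk G', hG'.1.aemeasurable.measurable_mk, hG'.1.aemeasurable.ae_eq_mk⟩
  set F : ℝ → ℂ := fun x => conj (g x) * g' x with hF
  have hFm : Measurable F := (Complex.continuous_conj.measurable.comp hgm).mul hg'm
  -- F is integrable (Cauchy-Schwarz)
  have hg2 : MemLp g 2 (volume : Measure ℝ) := hG.ae_eq hGg
  have hg'2 : MemLp g' 2 (volume : Measure ℝ) := hG'.ae_eq hG'g
  have hconj2 : MemLp (fun x => conj (g x)) 2 (volume : Measure ℝ) := by
    refine ⟨Complex.continuous_conj.comp_aestronglyMeasurable hg2.1, ?_⟩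
    have : eLpNorm (fun x => conj (g x)) 2 volume = eLpNorm g 2 volume := by
      apply eLpNorm_congr_norm_ae
      filter_upwards with x
      simp
    rw [this]
    exact hg2.2
  have hFi : Integrable F := by
    have hm : MemLp ((fun x => conj (g x)) • g') 1 (volume : Measure ℝ) :=
      MemLp.smul (r := 1) hg'2 hconj2
    have := memLp_one_iff_integrable.mp hm
    exact this.congr (Filter.Eventually.of_forall fun x => by
      simp [hF, Pi.smul_apply, smul_eq_mul])
  -- the scaling equation for F
  have hGg2 : ∀ᵐ x : ℝ, G x = g x ∧ G' x = g' x := hGg.and hG'g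
  have hFscal : ∀ᵐ x : ℝ, F x =
      (N : ℂ)⁻¹ * conj (m₀ (x / N)) * m₀' (x / N) * F (x / N) := by
    have hdiv : ∀ᵐ x : ℝ, G (x / N) = g (x / N) ∧ G' (x / N) = g' (x / N) :=
      ae_div hGg2 hNR
    have hsq : (((Real.sqrt N : ℝ)) : ℂ)⁻¹ * (((Real.sqrt N : ℝ)) : ℂ)⁻¹ = (N : ℂ)⁻¹ := by
      rw [← mul_inv, ← Complex.ofReal_mul, Real.mul_self_sqrt (by positivity)]
      simp
    filter_upwards [hscal, hscal', hGg2, hdiv] with x h1 h2 h3 h4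
    show conj (g x) * g' x = _
    rw [← h3.1, ← h3.2, h1, h2]
    show _ = _ * (conj (g (x / ↑N)) * g' (x / ↑N))
    rw [← h4.1, ← h4.2, ← hsq]
    simp only [map_mul, map_inv₀, Complex.conj_ofReal]
    ring
  -- a.e. summability
  have hsumae : ∀ᵐ ω : ℝ, Summable fun k : ℤ => ‖F (ω + 2 * Real.pi * k)‖ :=
    summable_ae F hFm hFi
  -- periodicity of m₀, m₀' over 2πℤ
  have hm0per : ∀ (x : ℝ) (k : ℤ), m₀ (x + 2 * Real.pi * k) = m₀ x := by
    intro x k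
    have h := (Function.Periodic.int_mul (hm₀p : Function.Periodic m₀ (2 * Real.pi)) k) x
    rw [← h]
    ring_nf
  have hm0'per : ∀ (x : ℝ) (k : ℤ), m₀' (x + 2 * Real.pi * k) = m₀' x := by
    intro x k
    have h := (Function.Periodic.int_mul (hm₀'p : Function.Periodic m₀' (2 * Real.pi)) k) x
    rw [← h]
    ring_nf
  -- integrability part
  have hIntF : IntegrableOn (fun ω => ∑' k : ℤ, F (ω + 2 * Real.pi * k))
      (Set.Ioc 0 (2 * Real.pi)) volume := by
    have := periodization_integrableOn F hFm hFi 0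
    simpa using this
  have h1 : ∀ᵐ ω : ℝ, ∀ m : ℤ,
      G (ω + 2 * Real.pi * m) = g (ω + 2 * Real.pi * m) ∧
      G' (ω + 2 * Real.pi * m) = g' (ω + 2 * Real.pi * m) :=
    ae_all_iff.mpr fun m => ae_add hGg2 (2 * Real.pi * m)
  constructor
  · -- integrability
    refine hIntF.congr ?_
    refine ae_restrict_of_ae ?_
    filter_upwards [h1] with ω hω
    refine tsum_congr fun k => ?_
    rw [(hω k).1, (hω k).2]
  -- the fixed point equation
  have h2 : ∀ᵐ ω : ℝ, ∀ l : ℕ, ∀ k : ℤ,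
      G ((ω + 2 * Real.pi * l) / N + 2 * Real.pi * k)
        = g ((ω + 2 * Real.pi * l) / N + 2 * Real.pi * k) ∧
      G' ((ω + 2 * Real.pi * l) / N + 2 * Real.pi * k)
        = g' ((ω + 2 * Real.pi * l) / N + 2 * Real.pi * k) :=
    ae_all_iff.mpr fun l => ae_all_iff.mpr fun k =>
      ae_add (ae_div (ae_add hGg2 (2 * Real.pi * k)) hNR) (2 * Real.pi * l)
  have h3 : ∀ᵐ ω : ℝ, ∀ m : ℤ,
      F (ω + 2 * Real.pi * m) =
        (N : ℂ)⁻¹ * conj (m₀ ((ω + 2 * Real.pi * m) / N)) * m₀' ((ω + 2 * Real.pi * m) / N) *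
          F ((ω + 2 * Real.pi * m) / N) :=
    ae_all_iff.mpr fun m => ae_add hFscal (2 * Real.pi * m)
  have h5 : ∀ᵐ ω : ℝ, ∀ l : ℕ,
      Summable fun k : ℤ => ‖F ((ω + 2 * Real.pi * l) / N + 2 * Real.pi * k)‖ :=
    ae_all_iff.mpr fun l => ae_add (ae_div hsumae hNR) (2 * Real.pi * l)
  filter_upwards [h1, h2, h3, hsumae, h5] with ω H1 H2 H3 H4 H5
  -- replace G by g in the periodization appearing inside `ruelle`
  have hP : ∀ l : ℕ,
      (∑' k : ℤ, conj (G ((ω + 2 * Real.pi * l) / N + 2 * Real.pi * k)) *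
        G' ((ω + 2 * Real.pi * l) / N + 2 * Real.pi * k))
      = ∑' k : ℤ, F ((ω + 2 * Real.pi * l) / N + 2 * Real.pi * k) := by
    intro l
    refine tsum_congr fun k => ?_
    rw [(H2 l k).1, (H2 l k).2]
  -- each term of the Ruelle sum
  have hterm : ∀ l : ℕ, ∀ k : ℤ,
      (N : ℂ)⁻¹ * (conj (m₀ ((ω + 2 * Real.pi * l) / N)) * m₀' ((ω + 2 * Real.pi * l) / N) *
        F ((ω + 2 * Real.pi * l) / N + 2 * Real.pi * k))
      = F (ω + 2 * Real.pi * ((k * N + l : ℤ) : ℝ)) := by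
    intro l k
    have harg : (ω + 2 * Real.pi * ((k * N + l : ℤ) : ℝ)) / N
        = (ω + 2 * Real.pi * l) / N + 2 * Real.pi * k := by
      push_cast
      field_simp
      ring
    have h := H3 (k * N + l)
    rw [harg, hm0per _ k, hm0'per _ k] at h
    rw [h]
    ring
  -- summability of the full periodization at ω
  have hsumm : Summable fun m : ℤ => F (ω + 2 * Real.pi * m) := H4.of_norm
  -- the re-indexing equivalence
  set e : Fin N × ℤ ≃ ℤ := (Equiv.prodComm (Fin N) ℤ).trans (Int.divModEquiv N).symm with he
  have he_apply : ∀ (l : Fin N) (k : ℤ), e (l, k) = k * N + (l : ℤ) := fun l k => rfl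
  have hsummE : Summable fun p : Fin N × ℤ => F (ω + 2 * Real.pi * (e p : ℝ)) :=
    e.summable_iff.mpr hsumm
  have hsplit : ∑ l ∈ Finset.range N,
      ∑' k : ℤ, F (ω + 2 * Real.pi * ((k * N + l : ℤ) : ℝ))
      = ∑' m : ℤ, F (ω + 2 * Real.pi * (m : ℝ)) := by
    have step1 : ∑ l ∈ Finset.range N,
        ∑' k : ℤ, F (ω + 2 * Real.pi * ((k * N + l : ℤ) : ℝ))
        = ∑ l : Fin N, ∑' k : ℤ, F (ω + 2 * Real.pi * ((e (l, k) : ℤ) : ℝ)) := by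
      rw [← Fin.sum_univ_eq_sum_range
        (fun l : ℕ => ∑' k : ℤ, F (ω + 2 * Real.pi * ((k * N + (l : ℤ) : ℤ) : ℝ))) N]
      refine Finset.sum_congr rfl fun l _ => ?_
      refine tsum_congr fun k => ?_
      rw [he_apply]
    rw [step1]
    have step2 : ∑ l : Fin N, ∑' k : ℤ, F (ω + 2 * Real.pi * ((e (l, k) : ℤ) : ℝ))
        = ∑' l : Fin N, ∑' k : ℤ, F (ω + 2 * Real.pi * ((e (l, k) : ℤ) : ℝ)) :=
      (tsum_fintype _).symm
    rw [step2]
    have step3 : ∑' l : Fin N, ∑' k : ℤ, F (ω + 2 * Real.pi * ((e (l, k) : ℤ) : ℝ))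
        = ∑' p : Fin N × ℤ, F (ω + 2 * Real.pi * ((e p : ℤ) : ℝ)) :=
      (Summable.tsum_prod' hsummE fun l => hsummE.prod_factor l).symm
    rw [step3]
    exact e.tsum_eq fun m => F (ω + 2 * Real.pi * (m : ℝ))
  -- put everything together
  calc ruelle N m₀ m₀' (fun x => ∑' k : ℤ, conj (G (x + 2 * Real.pi * k)) * G' (x + 2 * Real.pi * k)) ω
      = (N : ℂ)⁻¹ * ∑ l ∈ Finset.range N,
          conj (m₀ ((ω + 2 * Real.pi * l) / N)) * m₀' ((ω + 2 * Real.pi * l) / N) *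
            ∑' k : ℤ, F ((ω + 2 * Real.pi * l) / N + 2 * Real.pi * k) := by
        rw [ruelle]
        congr 1
        refine Finset.sum_congr rfl fun l _ => ?_
        rw [hP l]
    _ = ∑ l ∈ Finset.range N, ∑' k : ℤ,
          (N : ℂ)⁻¹ * (conj (m₀ ((ω + 2 * Real.pi * l) / N)) * m₀' ((ω + 2 * Real.pi * l) / N) *
            F ((ω + 2 * Real.pi * l) / N + 2 * Real.pi * k)) := by
        rw [Finset.mul_sum]
        refine Finset.sum_congr rfl fun l _ => ?_
        rw [tsum_mul_left, tsum_mul_left]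
    _ = ∑ l ∈ Finset.range N, ∑' k : ℤ, F (ω + 2 * Real.pi * ((k * N + l : ℤ) : ℝ)) := by
        refine Finset.sum_congr rfl fun l _ => tsum_congr fun k => hterm l k
    _ = ∑' m : ℤ, F (ω + 2 * Real.pi * (m : ℝ)) := hsplit
    _ = ∑' k : ℤ, conj (G (ω + 2 * Real.pi * k)) * G' (ω + 2 * Real.pi * k) := by
        refine tsum_congr fun m => ?_
        rw [(H1 m).1, (H1 m).2]
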